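/- Suppose n is even. Let W₁ be the n×n integer matrix with columns A^{2j} e for j = 0, 1, …, n−1, let W̃₁ be the n×(n/2) integer matrix with columns A^{2j} e for j = 0, 1, …, n/2 − 1, and let W̃ be the n×(n/2) integer matrix with columns A^{j} e for j = 0, 1, …, n/2 − 1 (the first n/2 columns of W). Then rank₂(W̃₁) = rank₂(W₁) and rank₂(W̃) = rank₂(W). -/

import Mathlib

open Matrix Submodule Module

private lemma zmod2_add_self (a : ZMod 2) : a + a = 0 := by revert a; decide

private lemma zmod2_mul_self (a : ZMod 2) : a * a = a := by revert a; decide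

private lemma symm_pow_dot {n : ℕ} (M : Matrix (Fin n) (Fin n) (ZMod 2)) (hsym : Mᵀ = M)
    (u w : Fin n → ZMod 2) (i : ℕ) :
    (M ^ i *ᵥ u) ⬝ᵥ w = u ⬝ᵥ (M ^ i *ᵥ w) := by
  have hpt : (M ^ i)ᵀ = M ^ i := by rw [transpose_pow, hsym]
  rw [dotProduct_mulVec]
  conv_lhs => rw [← hpt, mulVec_transpose]

private lemma quad_zero {n : ℕ} (N : Matrix (Fin n) (Fin n) (ZMod 2)) (hsym : Nᵀ = N)
    (hdiag : ∀ i, N i i = 0) (y : Fin n → ZMod 2) : y ⬝ᵥ (N *ᵥ y) = 0 := by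
  have h1 : y ⬝ᵥ (N *ᵥ y) = ∑ p : Fin n × Fin n, y p.1 * N p.1 p.2 * y p.2 := by
    rw [Fintype.sum_prod_type]
    simp [dotProduct, mulVec, Finset.mul_sum, mul_assoc]
  rw [h1]
  apply Finset.sum_ninvolution (fun p => (p.2, p.1))
  · intro p
    have h21 : N p.2 p.1 = N p.1 p.2 := by nth_rewrite 1 [← hsym]; rw [transpose_apply]
    simp only [h21]
    rw [show y p.2 * N p.1 p.2 * y p.1 = y p.1 * N p.1 p.2 * y p.2 from by ring]
    exact zmod2_add_self _
  · intro p hp hne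
    apply hp
    have : p.1 = p.2 := congrArg Prod.snd hne
    rw [← this, hdiag]
    ring
  · intro a; exact Finset.mem_univ _
  · intro a; rfl

private lemma key_mem {n : ℕ} (hn2 : n % 2 = 0) (M : Matrix (Fin n) (Fin n) (ZMod 2))
    (hsym : Mᵀ = M) (u : Fin n → ZMod 2) (horth : ∀ k, u ⬝ᵥ (M ^ k *ᵥ u) = 0) (j : ℕ) :
    M ^ j *ᵥ u ∈ span (ZMod 2) ((fun j : ℕ => M ^ j *ᵥ u) '' Set.Iio (n / 2)) := by
  set v : ℕ → (Fin n → ZMod 2) := fun j => M ^ j *ᵥ u with hv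
  set T : ℕ → Submodule (ZMod 2) (Fin n → ZMod 2) :=
    fun k => span (ZMod 2) (v '' Set.Iio k) with hT
  have hmono : ∀ {k l : ℕ}, k ≤ l → T k ≤ T l := fun {k l} hkl =>
    span_mono (Set.image_mono (fun x hx => lt_of_lt_of_le hx hkl))
  have hsucc : ∀ j, v (j + 1) = M *ᵥ v j := by
    intro j
    simp only [hv, pow_succ', ← mulVec_mulVec]
  -- step lemma
  have hstep : ∀ k, v k ∈ T k → ∀ j, v j ∈ T k := by
    intro k hk j
    rcases lt_or_ge j k with h | h
    · exact subset_span ⟨j, h, rfl⟩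
    · induction j, h using Nat.le_induction with
      | base => exact hk
      | succ m hm ih =>
        have hmap : ∀ x ∈ T k, M *ᵥ x ∈ T k := by
          intro x hx
          have h2 : Submodule.map M.mulVecLin (T k) ≤ T k := by
            rw [hT, Submodule.map_span, span_le]
            rintro _ ⟨_, ⟨i, hi, rfl⟩, rfl⟩
            have : M.mulVecLin (v i) = v (i + 1) := (hsucc i).symm
            rw [this]
            rcases lt_or_eq_of_le (Nat.succ_le_of_lt hi) with h' | h'
            · exact subset_span ⟨i + 1, h', rfl⟩
            · rw [show i + 1 = k from h']; exact hk
          exact h2 ⟨x, hx, rfl⟩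
        rw [hsucc]
        exact hmap _ ih
  by_cases hcase : v (n / 2) ∈ T (n / 2)
  · exact hstep _ hcase j
  exfalso
  -- strictly increasing chain
  have hnot : ∀ k ≤ n / 2, v k ∉ T k := by
    intro k hkle hmem
    exact hcase (hmono hkle (hstep k hmem (n / 2)))
  have hrank : ∀ k ≤ n / 2 + 1, k ≤ finrank (ZMod 2) (T k) := by
    intro k hk
    induction k with
    | zero => exact Nat.zero_le _
    | succ m ih =>
      have hm1 : m ≤ n / 2 := Nat.lt_succ_iff.mp hk
      have hlt : T m < T (m + 1) := by
        refine lt_of_le_of_ne (hmono (Nat.le_succ m)) fun heq => ?_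
        exact hnot m hm1 (heq ▸ subset_span ⟨m, Nat.lt_succ_self m, rfl⟩)
      have := Submodule.finrank_lt_finrank_of_lt hlt
      have := ih (le_trans (Nat.le_succ m) hk)
      omega
  -- orthogonality bound
  set U : Submodule (ZMod 2) (Fin n → ZMod 2) := span (ZMod 2) (Set.range v) with hU
  set B : LinearMap.BilinForm (ZMod 2) (Fin n → ZMod 2) :=
    Matrix.toBilin' (1 : Matrix (Fin n) (Fin n) (ZMod 2)) with hB
  have hBapp : ∀ x y, B x y = x ⬝ᵥ y := by
    intro x y
    rw [hB, Matrix.toBilin'_apply', one_mulVec]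
  have hBnd : B.Nondegenerate := by
    refine ⟨fun x hx => ?_, fun x hx => ?_⟩
    funext i
    have := hx (Pi.single i 1)
    rw [hBapp, dotProduct_single, mul_one] at this
    exact this
    funext i
    have := hx (Pi.single i 1)
    rw [hBapp, single_dotProduct, one_mul] at this
    exact this
  have hrefl : B.IsRefl := by
    intro x y hxy
    rw [hBapp] at hxy ⊢
    rwa [dotProduct_comm]
  have hUorth : U ≤ B.orthogonal U := by
    rw [hU, span_le]
    rintro _ ⟨i, rfl⟩
    rw [SetLike.mem_coe, LinearMap.BilinForm.mem_orthogonal_iff]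
    intro y hy
    have hker : U ≤ LinearMap.ker (B.flip (v i)) := by
      rw [hU, span_le]
      rintro _ ⟨m, rfl⟩
      rw [SetLike.mem_coe, LinearMap.mem_ker]
      show B (v m) (v i) = 0
      rw [hBapp, hv]
      rw [symm_pow_dot M hsym, mulVec_mulVec, ← pow_add]
      exact horth (m + i)
    exact hker hy
  have hfin : finrank (ZMod 2) (Fin n → ZMod 2) = n := by
    rw [Module.finrank_fintype_fun_eq_card, Fintype.card_fin]
  have hUle : finrank (ZMod 2) U ≤ n - finrank (ZMod 2) U := by
    calc finrank (ZMod 2) U ≤ finrank (ZMod 2) (B.orthogonal U) := Submodule.finrank_mono hUorth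
    _ = n - finrank (ZMod 2) U := by
        rw [LinearMap.BilinForm.finrank_orthogonal hBnd U, hfin]
  have hTU : T (n / 2 + 1) ≤ U := span_mono (by rintro _ ⟨i, _, rfl⟩; exact ⟨i, rfl⟩)
  have h1 : n / 2 + 1 ≤ finrank (ZMod 2) (T (n / 2 + 1)) := hrank _ le_rfl
  have h2 : finrank (ZMod 2) (T (n / 2 + 1)) ≤ finrank (ZMod 2) U := Submodule.finrank_mono hTU
  have hUn : finrank (ZMod 2) U ≤ n := by
    have := Submodule.finrank_le U
    rwa [hfin] at this
  omega

private lemma key_span {n : ℕ} (hn2 : n % 2 = 0) (M : Matrix (Fin n) (Fin n) (ZMod 2))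
    (hsym : Mᵀ = M) (u : Fin n → ZMod 2) (horth : ∀ k, u ⬝ᵥ (M ^ k *ᵥ u) = 0) :
    span (ZMod 2) (Set.range fun j : Fin (n / 2) => M ^ (j : ℕ) *ᵥ u) =
      span (ZMod 2) (Set.range fun j : Fin n => M ^ (j : ℕ) *ᵥ u) := by
  have hr : ∀ k : ℕ, (Set.range fun j : Fin k => M ^ (j : ℕ) *ᵥ u) =
      (fun j : ℕ => M ^ j *ᵥ u) '' Set.Iio k := by
    intro k; ext x; constructor
    · rintro ⟨j, rfl⟩; exact ⟨j, j.isLt, rfl⟩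
    · rintro ⟨m, hm, rfl⟩; exact ⟨⟨m, hm⟩, rfl⟩
  rw [hr, hr]
  apply le_antisymm
  · exact span_mono (Set.image_mono fun x hx => lt_of_lt_of_le hx (Nat.div_le_self n 2))
  · rw [span_le]
    rintro _ ⟨m, hm, rfl⟩
    exact key_mem hn2 M hsym u horth m

private lemma horth_all {n : ℕ} (hn2 : n % 2 = 0) (M : Matrix (Fin n) (Fin n) (ZMod 2))
    (hsym : Mᵀ = M) (hdiag : ∀ i, M i i = 0) :
    ∀ k, (fun _ => (1 : ZMod 2)) ⬝ᵥ (M ^ k *ᵥ fun _ => (1 : ZMod 2)) = 0 := by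
  set u : Fin n → ZMod 2 := fun _ => 1 with hu
  intro k
  induction k using Nat.strong_induction_on with
  | _ k ih =>
  rcases Nat.even_or_odd k with ⟨m, hm⟩ | ⟨m, hm⟩
  · subst hm
    rcases Nat.eq_zero_or_pos m with rfl | hmpos
    · have hn0 : ((n : ℕ) : ZMod 2) = 0 := by
        rw [ZMod.natCast_eq_zero_iff]
        omega
      simpa [hu, dotProduct, Finset.card_univ] using hn0
    · have h1 : u ⬝ᵥ (M ^ (m + m) *ᵥ u) = (M ^ m *ᵥ u) ⬝ᵥ (M ^ m *ᵥ u) := by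
        rw [symm_pow_dot M hsym, mulVec_mulVec, ← pow_add]
      have h2 : (M ^ m *ᵥ u) ⬝ᵥ (M ^ m *ᵥ u) = u ⬝ᵥ (M ^ m *ᵥ u) := by
        simp only [dotProduct, hu, one_mul, zmod2_mul_self]
      rw [h1, h2]
      exact ih m (by omega)
  · subst hm
    have h3 : M ^ m *ᵥ (M *ᵥ (M ^ m *ᵥ u)) = M ^ (2 * m + 1) *ᵥ u := by
      rw [mulVec_mulVec, mulVec_mulVec, ← pow_succ, ← pow_add,
        show m + 1 + m = 2 * m + 1 from by omega]
    rw [← h3, ← symm_pow_dot M hsym]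
    exact quad_zero M hsym hdiag _

/-- For `n` even, `rank₂(Wt₁) = rank₂(W₁)` and `rank₂(Wt) = rank₂(W)`,
where `W₁ = [e, A²e, …, A^{2n-2}e]`, `Wt₁ = [e, A²e, …, A^{n-2}e]` and
`Wt = [e, Ae, …, A^{n/2-1}e]`. -/
theorem stmt_13 (n : ℕ) (hn : 0 < n) (hn_even : Even n)
    (A : Matrix (Fin n) (Fin n) ℤ)
    (hA_symm : Aᵀ = A)
    (hA_diag : ∀ i, A i i = 0)
    (hA_01 : ∀ i j, A i j = 0 ∨ A i j = 1)
    (W : Matrix (Fin n) (Fin n) ℤ)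
    (hW : W = Matrix.of fun (i j : Fin n) => (A ^ (j : ℕ)).mulVec (fun _ => (1 : ℤ)) i)
    (W₁ : Matrix (Fin n) (Fin n) ℤ)
    (hW₁ : W₁ = Matrix.of fun (i j : Fin n) =>
      (A ^ (2 * (j : ℕ))).mulVec (fun _ => (1 : ℤ)) i)
    (Wt₁ : Matrix (Fin n) (Fin (n / 2)) ℤ)
    (hWt₁ : Wt₁ = Matrix.of fun (i : Fin n) (j : Fin (n / 2)) =>
      (A ^ (2 * (j : ℕ))).mulVec (fun _ => (1 : ℤ)) i)
    (Wt : Matrix (Fin n) (Fin (n / 2)) ℤ)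
    (hWt : Wt = Matrix.of fun (i : Fin n) (j : Fin (n / 2)) =>
      (A ^ (j : ℕ)).mulVec (fun _ => (1 : ℤ)) i) :
    (Wt₁.map (Int.cast : ℤ → ZMod 2)).rank = (W₁.map (Int.cast : ℤ → ZMod 2)).rank ∧
    (Wt.map (Int.cast : ℤ → ZMod 2)).rank = (W.map (Int.cast : ℤ → ZMod 2)).rank := by
  have hn2 : n % 2 = 0 := Nat.even_iff.mp hn_even
  set Mc : Matrix (Fin n) (Fin n) (ZMod 2) := A.map (Int.cast : ℤ → ZMod 2) with hMc
  have hMsym : Mcᵀ = Mc := by rw [hMc, ← Matrix.transpose_map, hA_symm]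
  have hMdiag : ∀ i, Mc i i = 0 := fun i => by
    rw [hMc]
    simp [Matrix.map_apply, hA_diag i]
  have hpow : ∀ j : ℕ, (A ^ j).map (Int.cast : ℤ → ZMod 2) = Mc ^ j := by
    intro j
    have := map_pow ((Int.castRingHom (ZMod 2)).mapMatrix) A j
    simpa [RingHom.mapMatrix_apply] using this
  have hcol : ∀ (k : ℕ) (g : Fin k → ℕ) (P : Matrix (Fin n) (Fin k) ℤ),
      P = (Matrix.of fun (i : Fin n) (j : Fin k) =>
        (A ^ g j).mulVec (fun _ => (1 : ℤ)) i) →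
      (P.map (Int.cast : ℤ → ZMod 2))ᵀ
        = fun j : Fin k => Mc ^ g j *ᵥ (fun _ => (1 : ZMod 2)) := by
    intro k g P hP
    funext j i
    subst hP
    show (Int.castRingHom (ZMod 2)) ((A ^ g j *ᵥ fun _ => (1 : ℤ)) i) = _
    rw [RingHom.map_mulVec]
    simp only [Int.coe_castRingHom]
    rw [show ((Int.cast : ℤ → ZMod 2) ∘ fun _ : Fin n => (1 : ℤ)) =
        fun _ : Fin n => (1 : ZMod 2) from funext fun _ => by simp, hpow]
  have horth := horth_all hn2 Mc hMsym hMdiag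
  have hsym2 : (Mc ^ 2)ᵀ = Mc ^ 2 := by rw [transpose_pow, hMsym]
  have horth2 : ∀ k, (fun _ => (1 : ZMod 2)) ⬝ᵥ ((Mc ^ 2) ^ k *ᵥ fun _ => (1 : ZMod 2)) = 0 := by
    intro k
    rw [← pow_mul]
    exact horth (2 * k)
  have hpm : ∀ k : ℕ, (fun j : Fin k => Mc ^ (2 * (j : ℕ)) *ᵥ fun _ => (1 : ZMod 2)) =
      fun j : Fin k => (Mc ^ 2) ^ (j : ℕ) *ᵥ fun _ => (1 : ZMod 2) := by
    intro k
    funext j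
    rw [pow_mul]
  constructor
  · rw [Matrix.rank_eq_finrank_span_cols, Matrix.rank_eq_finrank_span_cols, Matrix.col_def, Matrix.col_def,
      hcol n (fun j => 2 * (j : ℕ)) W₁ hW₁, hcol (n / 2) (fun j => 2 * (j : ℕ)) Wt₁ hWt₁,
      hpm, hpm, key_span hn2 (Mc ^ 2) hsym2 _ horth2]
  · rw [Matrix.rank_eq_finrank_span_cols, Matrix.rank_eq_finrank_span_cols, Matrix.col_def, Matrix.col_def,
      hcol n (fun j => (j : ℕ)) W hW, hcol (n / 2) (fun j => (j : ℕ)) Wt hWt,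
      key_span hn2 Mc hMsym _ horth]
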